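/- Let C be the 1-generator quasi-cyclic code over ℤ/4 of length mℓ generated by (f₁(x)g(x), …, f_ℓ(x)g(x)) in ((ℤ/4)[x]/(xᵐ-1))^ℓ, where xᵐ-1 = g(x)h(x) with g monic and gcd conditions: each fᵢ is coprime to h modulo 2. Then every nonzero codeword of C has Lee weight at least ℓ·d, where d is the minimum Lee weight of the cyclic code generated by g(x) in (ℤ/4)[x]/(xᵐ-1). -/

import Mathlib

open Polynomial

/-- Reduction mod 2, ℤ/4 → ℤ/2. -/
def ρ : ZMod 4 →+* ZMod 2 := ZMod.castHom (show (2:ℕ) ∣ 4 by norm_num) (ZMod 2)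

/-- Lee weight on ℤ/4: wL(0)=0, wL(1)=1, wL(2)=2, wL(3)=1. -/
def lee (x : ZMod 4) : ℕ :=
  match x.val with
  | 0 => 0
  | 1 => 1
  | 2 => 2
  | _ => 1

/-- Lee weight of the element of (ℤ/4)[x]/(xᵐ-1) represented by the polynomial p,
computed from its canonical representative of degree < m. -/
noncomputable def wt (m : ℕ) (p : Polynomial (ZMod 4)) : ℕ :=
  ∑ i ∈ Finset.range m, lee ((p %ₘ (X ^ m - 1)).coeff i)

/-- Coprimality mod 2 lifts to coprimality over ℤ/4 (since the kernel of ρ is nilpotent). -/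
lemma coprime_lift {p q : Polynomial (ZMod 4)}
    (hc : IsCoprime (p.map ρ) (q.map ρ)) : IsCoprime p q := by
  obtain ⟨u, v, huv⟩ := hc
  have hsurj : Function.Surjective (Polynomial.map ρ) :=
    Polynomial.map_surjective ρ (ZMod.ringHom_surjective ρ)
  obtain ⟨u', hu'⟩ := hsurj u
  obtain ⟨v', hv'⟩ := hsurj v
  set s : Polynomial (ZMod 4) := u' * p + v' * q with hs
  set t : Polynomial (ZMod 4) := s - 1 with ht
  have hmap : t.map ρ = 0 := by
    have : s.map ρ = 1 := by
      simp [hs, Polynomial.map_add, Polynomial.map_mul, hu', hv', huv]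
    simp [ht, Polynomial.map_sub, this]
  have htc : ∀ n, ρ (t.coeff n) = 0 := by
    intro n
    have := congrArg (fun r => r.coeff n) hmap
    simpa using this
  have ht2 : t * t = 0 := by
    ext n
    rw [Polynomial.coeff_mul]
    rw [Polynomial.coeff_zero]
    apply Finset.sum_eq_zero
    intro x _
    have h1 := htc x.1
    have h2 := htc x.2
    have : ∀ a b : ZMod 4, ρ a = 0 → ρ b = 0 → a * b = 0 := by decide
    exact this _ _ h1 h2
  have hunit : IsUnit s := by
    refine IsUnit.of_mul_eq_one (a := s) (2 - s) ?_
    have hst : s = 1 + t := by rw [ht]; ring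
    calc s * (2 - s) = 1 - t * t := by rw [hst]; ring
    _ = 1 := by rw [ht2, sub_zero]
  obtain ⟨w, hw⟩ := hunit.exists_left_inv
  exact ⟨w * u', w * v', by rw [← hw, hs]; ring⟩

theorem asr_bound (m ℓ : ℕ) (hm : Odd m) (hmpos : 0 < m) (hℓ : 1 ≤ ℓ)
    (g h : Polynomial (ZMod 4)) (hg : g.Monic) (hh : h.Monic)
    (hfac : g * h = X ^ m - 1)
    (f : Fin ℓ → Polynomial (ZMod 4))
    (hcop : ∀ i, IsCoprime ((f i).map ρ) (h.map ρ))
    (d : ℕ)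
    (hd : IsLeast {w | ∃ b : Polynomial (ZMod 4),
      ¬ (X ^ m - 1 : Polynomial (ZMod 4)) ∣ b * g ∧ w = wt m (b * g)} d)
    (a : Polynomial (ZMod 4))
    (hnz : ∃ i, ¬ (X ^ m - 1 : Polynomial (ZMod 4)) ∣ a * f i * g) :
    ℓ * d ≤ ∑ i : Fin ℓ, wt m (a * f i * g) := by
  obtain ⟨i₀, hi₀⟩ := hnz
  -- every component is nonzero
  have hall : ∀ j, ¬ (X ^ m - 1 : Polynomial (ZMod 4)) ∣ a * f j * g := by
    intro j hdvd
    obtain ⟨c, hc⟩ := hdvd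
    -- cancel g (monic, hence regular)
    have hreg := hg.isRegular.left
    have hgc : g * (h * c) = g * (a * f j) := by
      rw [← mul_assoc, hfac]
      rw [show a * f j * g = g * (a * f j) by ring] at hc
      rw [← hc]
    have hha : h ∣ a * f j := ⟨c, (hreg hgc).symm⟩
    have hcpl : IsCoprime h (f j) := (coprime_lift (hcop j)).symm
    have hha' : h ∣ f j * a := by rwa [mul_comm] at hha
    have hda : h ∣ a := hcpl.dvd_of_dvd_mul_left hha'
    obtain ⟨e, he⟩ := hda
    apply hi₀
    exact ⟨e * f i₀, by rw [he, ← hfac]; ring⟩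
  have hle : ∀ j : Fin ℓ, d ≤ wt m (a * f j * g) :=
    fun j => hd.2 ⟨a * f j, hall j, rfl⟩
  calc ℓ * d = (Finset.univ : Finset (Fin ℓ)).card • d := by simp [mul_comm]
  _ ≤ ∑ i : Fin ℓ, wt m (a * f i * g) :=
      Finset.card_nsmul_le_sum _ _ _ (fun i _ => hle i)
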